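/- arXiv:2203.06176 — 5 statements merged into one kernel-verified Lean document; each statement's English description precedes it below -/
import Mathlib

section
/- Let κ = κ(λ,N) be the effective regularization defined by 1 = λ/κ + (1/N) ∑_{i=1}^P λ_i/(κ + λ_i) with λ_i ≥ 0. Then the derivative ∂κ/∂λ satisfies ∂κ/∂λ = 1 / (1 − (1/N) ∑_{i=1}^P λ_i²/(κ + λ_i)²), and moreover 1 ≤ ∂κ/∂λ ≤ κ/λ. -/
/-- Derivative formula and bounds for the effective regularization κ(λ, N):
∂κ/∂λ = 1/(1 − (1/N)∑ λᵢ²/(κ+λᵢ)²) and 1 ≤ ∂κ/∂λ ≤ κ/λ. -/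
theorem stmt_2 (P N : ℕ) (hN : 0 < N) (lam : Fin P → ℝ)
    (hlam : ∀ i, 0 ≤ lam i)
    (kap : ℝ → ℝ) (hpos : ∀ l > 0, 0 < kap l)
    (heq : ∀ l > 0, 1 = l / kap l + (1 / (N : ℝ)) * ∑ i, lam i / (kap l + lam i))
    (l : ℝ) (hl : 0 < l) (k' : ℝ) (hder : HasDerivAt kap k' l) :
    k' = 1 / (1 - (1 / (N : ℝ)) * ∑ i, (lam i) ^ 2 / (kap l + lam i) ^ 2) ∧
      1 ≤ k' ∧ k' ≤ kap l / l := by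
  have hk : 0 < kap l := hpos l hl
  have hki : ∀ i, 0 < kap l + lam i := fun i => by
    have := hlam i; linarith
  have hNne : (N : ℝ) ≠ 0 := Nat.cast_ne_zero.mpr hN.ne'
  -- derivative of each summand
  have hdi : ∀ i : Fin P, HasDerivAt (fun x => lam i / (kap x + lam i))
      ((0 * (kap l + lam i) - lam i * k') / (kap l + lam i) ^ 2) l := fun i =>
    (hasDerivAt_const l (lam i)).div (hder.add_const (lam i)) (hki i).ne'
  have hsum : HasDerivAt (fun x => ∑ i, lam i / (kap x + lam i))
      (∑ i, (0 * (kap l + lam i) - lam i * k') / (kap l + lam i) ^ 2) l :=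
    HasDerivAt.fun_sum (fun i _ => hdi i)
  have hd1 : HasDerivAt (fun x => x / kap x)
      ((1 * kap l - l * k') / kap l ^ 2) l :=
    (hasDerivAt_id l).div hder hk.ne'
  have hD : HasDerivAt (fun x => x / kap x + (1 / (N : ℝ)) * ∑ i, lam i / (kap x + lam i))
      ((1 * kap l - l * k') / kap l ^ 2 +
        (1 / (N : ℝ)) * ∑ i, (0 * (kap l + lam i) - lam i * k') / (kap l + lam i) ^ 2) l :=
    hd1.add (hsum.const_mul _)
  have hEq : (fun x => x / kap x + (1 / (N : ℝ)) * ∑ i, lam i / (kap x + lam i))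
      =ᶠ[nhds l] fun _ => (1 : ℝ) := by
    filter_upwards [eventually_gt_nhds hl] with x hx
    exact (heq x hx).symm
  have hzero : (1 * kap l - l * k') / kap l ^ 2 +
      (1 / (N : ℝ)) * ∑ i, (0 * (kap l + lam i) - lam i * k') / (kap l + lam i) ^ 2 = 0 :=
    hD.unique ((hasDerivAt_const l 1).congr_of_eventuallyEq hEq)
  -- abbreviations for the three sums
  set k := kap l with hkdef
  set a := ∑ i, lam i / (k + lam i) with ha
  set b := ∑ i, lam i / (k + lam i) ^ 2 with hb
  set s := ∑ i, (lam i) ^ 2 / (k + lam i) ^ 2 with hs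
  have hsumeq : ∑ i, (0 * (k + lam i) - lam i * k') / (k + lam i) ^ 2 = -(k' * b) := by
    rw [hb, Finset.mul_sum, ← Finset.sum_neg_distrib]
    refine Finset.sum_congr rfl fun i _ => ?_
    field_simp
    ring
  have hsab : s = a - k * b := by
    rw [hs, ha, hb, Finset.mul_sum, ← Finset.sum_sub_distrib]
    refine Finset.sum_congr rfl fun i _ => ?_
    have h := (hki i).ne'
    field_simp
    ring
  have h0b : 0 ≤ b := Finset.sum_nonneg fun i _ => div_nonneg (hlam i) (by positivity)
  have h0s : 0 ≤ s := Finset.sum_nonneg fun i _ => by positivity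
  rw [hsumeq] at hzero
  have hH : (1:ℝ) = l / k + (1 / (N : ℝ)) * a := heq l hl
  have hH2 : k * (N:ℝ) = l * (N:ℝ) + a * k := by field_simp at hH; linarith
  have hz2 : (k - l * k') * (N:ℝ) = k' * b * k ^ 2 := by field_simp at hzero; linarith
  have hmain2 : k' * ((N:ℝ) - (a - k * b)) * k = (N:ℝ) * k := by
    linear_combination k' * hH2 - hz2
  have hmain3 : k' * ((N:ℝ) - (a - k * b)) = (N:ℝ) := mul_right_cancel₀ hk.ne' hmain2
  -- main identity: k' * (1 - s/N) = 1
  have hmain : k' * (1 - (1 / (N : ℝ)) * s) = 1 := by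
    rw [hsab]
    field_simp
    linear_combination hmain3
  have hX : 1 - (1 / (N : ℝ)) * s = l / k + (1 / (N : ℝ)) * (k * b) := by
    rw [hsab]
    linear_combination hH
  have hXpos : 0 < 1 - (1 / (N : ℝ)) * s := by
    rw [hX]
    have h1 : 0 < l / k := div_pos hl hk
    have h2 : 0 ≤ (1 / (N : ℝ)) * (k * b) := by positivity
    linarith
  have hXle : 1 - (1 / (N : ℝ)) * s ≤ 1 := by
    have : 0 ≤ (1 / (N : ℝ)) * s := by positivity
    linarith
  have hk' : k' = 1 / (1 - (1 / (N : ℝ)) * s) := by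
    rw [eq_div_iff hXpos.ne']
    exact hmain
  refine ⟨hk', ?_, ?_⟩
  · rw [hk']
    exact (one_le_div hXpos).mpr hXle
  · rw [hk']
    have hlk : 0 < l / k := div_pos hl hk
    have hle : l / k ≤ 1 - (1 / (N : ℝ)) * s := by
      rw [hX]
      have : 0 ≤ (1 / (N : ℝ)) * (k * b) := by positivity
      linarith
    calc 1 / (1 - (1 / (N : ℝ)) * s) ≤ 1 / (l / k) :=
          one_div_le_one_div_of_le hlk hle
      _ = k / l := by rw [one_div_div]
end

section
/- Let λ, η > 0, let λ_i ≥ 0 for i = 1,...,P, and suppose κ̃ ∈ ℂ satisfies κ̃ = λ − iη + (1/N) ∑_{i=1}^P λ_i(1 − λ_i/(κ̃ + λ_i)) with Re(κ̃) > 0. Let κ > 0 be the unique positive solution of κ = λ + (1/N) ∑_{i=1}^P λ_i(1 − λ_i/(κ + λ_i)). Then Re(κ̃) ≥ κ. -/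
/-- The real part of the complex effective regularization at λ − iη dominates
the real effective regularization at λ. -/
theorem stmt_3 (P N : ℕ) (hN : 0 < N) (lam : Fin P → ℝ) (hlam : ∀ i, 0 ≤ lam i)
    (l η : ℝ) (hl : 0 < l) (hη : 0 < η)
    (κ : ℝ) (hκ : 0 < κ)
    (hκeq : κ = l + (1 / (N : ℝ)) * ∑ i, lam i * (1 - lam i / (κ + lam i)))
    (hκuniq : ∀ κ' : ℝ, 0 < κ' →
      κ' = l + (1 / (N : ℝ)) * ∑ i, lam i * (1 - lam i / (κ' + lam i)) → κ' = κ)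
    (kt : ℂ) (hre : 0 < kt.re)
    (hkt : kt = (l : ℂ) - Complex.I * (η : ℂ) +
      (1 / (N : ℂ)) * ∑ i, (lam i : ℂ) * (1 - (lam i : ℂ) / (kt + (lam i : ℂ)))) :
    κ ≤ kt.re := by
  by_contra hcon
  push_neg at hcon
  set a := kt.re with ha
  have hNpos : (0:ℝ) < (N:ℝ) := by exact_mod_cast hN
  -- Step 1: a = l + (1/N) ∑ re of terms
  have h1 : a = l + (1/(N:ℝ)) * ∑ i,
      ((lam i : ℂ) * (1 - (lam i : ℂ) / (kt + (lam i : ℂ)))).re := by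
    conv_lhs => rw [ha, hkt]
    have : (1 / (N:ℂ)) = (((1/(N:ℝ)):ℝ) : ℂ) := by push_cast; ring
    rw [this]
    simp [Complex.add_re, Complex.sub_re, Complex.mul_re, Complex.re_ofReal_mul,
      Complex.re_sum]
  -- Step 2: per-term bound
  have hterm : ∀ i, lam i * (1 - lam i / (a + lam i)) ≤
      ((lam i : ℂ) * (1 - (lam i : ℂ) / (kt + (lam i : ℂ)))).re := by
    intro i
    rcases eq_or_lt_of_le (hlam i) with h0 | hpos
    · simp [← h0]
    · set t := lam i with ht
      have hwre : (kt + (t:ℂ)).re = a + t := by simp [ha]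
      have hapos : (0:ℝ) < a + t := by positivity
      have hns : (a + t)^2 ≤ Complex.normSq (kt + (t:ℂ)) := by
        rw [Complex.normSq_apply, hwre]
        nlinarith [sq_nonneg (kt + (t:ℂ)).im]
      have hre' : (((t:ℂ)) * (1 - (t:ℂ) / (kt + (t:ℂ)))).re
          = t * (1 - t * (a + t) / Complex.normSq (kt + (t:ℂ))) := by
        rw [show ((t:ℂ) * (1 - (t:ℂ) / (kt + (t:ℂ)))) =
          ((t:ℝ):ℂ) * (1 - (t:ℂ) / (kt + (t:ℂ))) from rfl, Complex.re_ofReal_mul]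
        congr 1
        rw [Complex.sub_re, Complex.one_re, Complex.div_re, hwre]
        simp
      rw [hre']
      have hnspos : (0:ℝ) < Complex.normSq (kt + (t:ℂ)) := by nlinarith
      have hkey : t * (a + t) / Complex.normSq (kt + (t:ℂ)) ≤ t / (a + t) := by
        have h2 : t * (a + t) / Complex.normSq (kt + (t:ℂ)) ≤ t * (a + t) / (a+t)^2 := by
          gcongr
        have h3 : t * (a + t) / (a+t)^2 = t / (a + t) := by
          field_simp
        linarith
      nlinarith
  -- Step 3: f(a) ≤ a
  have key : l + (1 / (N:ℝ)) * ∑ i, lam i * (1 - lam i / (a + lam i)) ≤ a := by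
    conv_rhs => rw [h1]
    gcongr
    exact hterm _
  -- Step 4: IVT
  set g : ℝ → ℝ := fun x => l + (1/(N:ℝ)) * ∑ i, lam i * (1 - lam i / (x + lam i)) - x
    with hg
  have hcont : ContinuousOn g (Set.Icc 0 a) := by
    apply ContinuousOn.sub _ continuousOn_id
    apply ContinuousOn.add continuousOn_const
    apply ContinuousOn.mul continuousOn_const
    apply continuousOn_finset_sum
    intro i _
    rcases eq_or_lt_of_le (hlam i) with h0 | hpos
    · simpa [← h0] using (continuousOn_const : ContinuousOn (fun _ : ℝ => (0:ℝ)) _)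
    · apply ContinuousOn.mul continuousOn_const
      apply ContinuousOn.sub continuousOn_const
      apply ContinuousOn.div continuousOn_const
      · exact (continuous_id.add continuous_const).continuousOn
      · intro x hx
        have : (0:ℝ) < x + lam i := by
          have := hx.1
          positivity
        linarith
  have hg0 : g 0 = l := by
    rw [hg]
    simp only
    have : ∀ i ∈ Finset.univ, lam i * (1 - lam i / ((0:ℝ) + lam i)) = 0 := by
      intro i _
      rcases eq_or_lt_of_le (hlam i) with h0 | hpos
      · simp [← h0]
      · rw [zero_add, div_self (ne_of_gt hpos)]
        ring
    rw [Finset.sum_congr rfl this]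
    simp
  have hga : g a ≤ 0 := by
    rw [hg]; simp only; linarith
  have h0a : (0:ℝ) ≤ a := le_of_lt hre
  have hivt := intermediate_value_Icc' h0a hcont
  have hmem : (0:ℝ) ∈ Set.Icc (g a) (g 0) := by
    constructor
    · exact hga
    · rw [hg0]; linarith
  obtain ⟨c, hc, hgc⟩ := hivt hmem
  have hcpos : 0 < c := by
    rcases lt_or_eq_of_le hc.1 with h | h
    · exact h
    · exfalso; rw [← h] at hgc; rw [hg0] at hgc; linarith
  have hceq : c = l + (1 / (N:ℝ)) * ∑ i, lam i * (1 - lam i / (c + lam i)) := by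
    have := hgc
    rw [hg] at this
    simp only at this
    linarith
  have := hκuniq c hcpos hceq
  have hca : c ≤ a := hc.2
  linarith
end

section
/- Let Q = A + iB ∈ ℂ^{P×P} with A real symmetric positive definite and B real symmetric. Then ‖Q^{-1}‖_op ≤ ‖A^{-1}‖_op = 1/λ_min(A). -/
open Matrix RCLike
open scoped InnerProductSpace ComplexConjugate ComplexOrder

section Aux
variable {n : Type*} [Fintype n] [DecidableEq n] {𝕜 : Type*} [RCLike 𝕜]



lemma aux_coercive {M : Matrix n n 𝕜} {c : ℝ} (h : (M - (c : 𝕜) • 1).PosSemidef) :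
    ∀ x : EuclideanSpace 𝕜 n, c * ‖x‖ ^ 2 ≤ re (⟪x, toEuclideanCLM (𝕜 := 𝕜) M x⟫_𝕜) := by
  intro x
  have h0 := h.re_dotProduct_nonneg (WithLp.equiv _ _ x)
  set x' : n → 𝕜 := WithLp.equiv _ _ x with hx'
  rw [sub_mulVec, smul_mulVec, one_mulVec, dotProduct_sub, dotProduct_smul, map_sub,
    smul_eq_mul, ← RCLike.real_smul_eq_coe_mul, RCLike.smul_re] at h0
  have h1 : re (star x' ⬝ᵥ x') = ‖x‖ ^ 2 := by
    have := inner_self_eq_norm_sq (𝕜 := 𝕜) x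
    rw [EuclideanSpace.inner_eq_star_dotProduct, dotProduct_comm] at this
    exact this
  have h2 : (⟪x, toEuclideanCLM (𝕜 := 𝕜) M x⟫_𝕜) = star x' ⬝ᵥ (M *ᵥ x') := by
    rw [EuclideanSpace.inner_eq_star_dotProduct, dotProduct_comm]; rfl
  rw [h1] at h0
  rw [h2]
  linarith

lemma aux_shift_psd {A : Matrix n n ℝ} (hA : A.IsHermitian) {c : ℝ}
    (hc : ∀ i, c ≤ hA.eigenvalues i) : (A - (c : ℝ) • 1).PosSemidef := by
  have key : A - c • 1 = (hA.eigenvectorUnitary : Matrix n n ℝ) *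
      diagonal (fun i => hA.eigenvalues i - c) *
      (star (hA.eigenvectorUnitary : Matrix n n ℝ)) := by
    have hd : diagonal (fun i => hA.eigenvalues i - c)
        = diagonal (RCLike.ofReal ∘ hA.eigenvalues) - c • (1 : Matrix n n ℝ) := by
      rw [smul_one_eq_diagonal, ← diagonal_sub]
      rfl
    rw [hd, Matrix.mul_sub, Matrix.sub_mul]
    conv_lhs => rw [hA.spectral_theorem, Unitary.conjStarAlgAut_apply]
    congr 1
    rw [Matrix.mul_smul, Matrix.smul_mul, Matrix.mul_one,
      (Matrix.mem_unitaryGroup_iff).mp hA.eigenvectorUnitary.2]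
  rw [key]
  exact (PosSemidef.diagonal (fun i => sub_nonneg.2 (hc i))).mul_mul_conjTranspose_same _

omit [DecidableEq n] in
lemma aux_map_psd {A : Matrix n n ℝ} (h : A.PosSemidef) :
    (A.map Complex.ofReal).PosSemidef := by
  obtain ⟨m, v, hB⟩ := posSemidef_iff_eq_sum_vecMulVec.mp h
  refine posSemidef_iff_eq_sum_vecMulVec.mpr ⟨m, fun k => Complex.ofReal ∘ v k, ?_⟩
  rw [hB]
  ext i j
  simp [Matrix.sum_apply, Matrix.map_apply, Matrix.vecMulVec_apply]



/-- lower bound on ‖Mx‖ from a coercivity bound on re⟪x, Mx⟫. -/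
lemma aux_norm_lb {M : Matrix n n 𝕜} {c : ℝ}
    (h : ∀ x : EuclideanSpace 𝕜 n, c * ‖x‖ ^ 2 ≤ re (⟪x, toEuclideanCLM (𝕜 := 𝕜) M x⟫_𝕜)) :
    ∀ x : EuclideanSpace 𝕜 n, c * ‖x‖ ≤ ‖toEuclideanCLM (𝕜 := 𝕜) M x‖ := by
  intro x
  rcases eq_or_ne x 0 with rfl | hx
  · simp
  · have h1 : c * ‖x‖ * ‖x‖ ≤ ‖toEuclideanCLM (𝕜 := 𝕜) M x‖ * ‖x‖ := by
      calc c * ‖x‖ * ‖x‖ = c * ‖x‖ ^ 2 := by ring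
        _ ≤ re (⟪x, toEuclideanCLM (𝕜 := 𝕜) M x⟫_𝕜) := h x
        _ ≤ ‖(⟪x, toEuclideanCLM (𝕜 := 𝕜) M x⟫_𝕜)‖ := RCLike.re_le_norm _
        _ ≤ ‖x‖ * ‖toEuclideanCLM (𝕜 := 𝕜) M x‖ := norm_inner_le_norm _ _
        _ = ‖toEuclideanCLM (𝕜 := 𝕜) M x‖ * ‖x‖ := mul_comm _ _
    exact le_of_mul_le_mul_right h1 (norm_pos_iff.mpr hx)

lemma aux_inv_bound {M : Matrix n n 𝕜} (hM : IsUnit M) {c : ℝ} (hc : 0 < c)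
    (h : ∀ x : EuclideanSpace 𝕜 n, c * ‖x‖ ≤ ‖toEuclideanCLM (𝕜 := 𝕜) M x‖) :
    ‖toEuclideanCLM (𝕜 := 𝕜) M⁻¹‖ ≤ c⁻¹ := by
  apply ContinuousLinearMap.opNorm_le_bound _ (inv_nonneg.2 hc.le)
  intro y
  set x := toEuclideanCLM (𝕜 := 𝕜) M⁻¹ y with hxdef
  have hMx : toEuclideanCLM (𝕜 := 𝕜) M x = y := by
    have : toEuclideanCLM (𝕜 := 𝕜) M (toEuclideanCLM (𝕜 := 𝕜) M⁻¹ y)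
        = (toEuclideanCLM (𝕜 := 𝕜) M * toEuclideanCLM (𝕜 := 𝕜) M⁻¹) y := rfl
    rw [hxdef, this, ← _root_.map_mul, mul_nonsing_inv _ ((isUnit_iff_isUnit_det M).1 hM), _root_.map_one,
      ContinuousLinearMap.one_apply]
  have := h x
  rw [hMx] at this
  rw [inv_mul_eq_div, le_div_iff₀ hc, mul_comm]
  exact this
end Aux

open Matrix

/-- Operator norm bound: ‖Q⁻¹‖_op ≤ ‖A⁻¹‖_op = 1/λ_min(A) for Q = A + iB with A
real symmetric positive definite and B real symmetric. -/
theorem stmt_8 (P : ℕ) (hP : 0 < P) (A B : Matrix (Fin P) (Fin P) ℝ)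
    (hA : A.PosDef) (hB : B.IsSymm) :
    letI Q : Matrix (Fin P) (Fin P) ℂ :=
      A.map Complex.ofReal + Complex.I • B.map Complex.ofReal
    ‖Matrix.toEuclideanCLM (𝕜 := ℂ) Q⁻¹‖ ≤ ‖Matrix.toEuclideanCLM (𝕜 := ℝ) A⁻¹‖ ∧
      ‖Matrix.toEuclideanCLM (𝕜 := ℝ) A⁻¹‖ = (⨅ i, hA.1.eigenvalues i)⁻¹ := by
  haveI : Nonempty (Fin P) := Fin.pos_iff_nonempty.mp hP
  set Ac : Matrix (Fin P) (Fin P) ℂ := A.map Complex.ofReal with hAc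
  set Bc : Matrix (Fin P) (Fin P) ℂ := B.map Complex.ofReal with hBc
  show ‖Matrix.toEuclideanCLM (𝕜 := ℂ) (Ac + Complex.I • Bc)⁻¹‖ ≤ _ ∧ _
  set Q : Matrix (Fin P) (Fin P) ℂ := Ac + Complex.I • Bc with hQdef
  set lam := hA.1.eigenvalues with hlam
  set c := ⨅ i, lam i with hc_def
  obtain ⟨j, hj⟩ : ∃ j, ∀ i, lam j ≤ lam i := Finite.exists_min lam
  have hcj : c = lam j := le_antisymm (ciInf_le (Finite.bddBelow_range _) j) (le_ciInf hj)
  have hcpos : 0 < c := hcj ▸ hA.eigenvalues_pos j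
  have hle : ∀ i, c ≤ lam i := fun i => ciInf_le (Finite.bddBelow_range _) i
  -- real coercivity
  have psdR : (A - c • 1).PosSemidef := aux_shift_psd hA.1 hle
  have hcoR : ∀ x : EuclideanSpace ℝ (Fin P),
      c * ‖x‖ ^ 2 ≤ RCLike.re (⟪x, toEuclideanCLM (𝕜 := ℝ) A x⟫_ℝ) := aux_coercive psdR
  have hlbR := aux_norm_lb hcoR
  have hAunit : IsUnit A := hA.isUnit
  have hubR : ‖toEuclideanCLM (𝕜 := ℝ) A⁻¹‖ ≤ c⁻¹ := aux_inv_bound hAunit hcpos hlbR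
  -- lower bound via eigenvector
  have hnormR : ‖toEuclideanCLM (𝕜 := ℝ) A⁻¹‖ = c⁻¹ := by
    refine le_antisymm hubR ?_
    set v : EuclideanSpace ℝ (Fin P) := hA.1.eigenvectorBasis j with hv
    have hv1 : ‖v‖ = 1 := hA.1.eigenvectorBasis.orthonormal.1 j
    have hAv : A *ᵥ ⇑v = lam j • ⇑v := hA.1.mulVec_eigenvectorBasis j
    have hAiv : A⁻¹ *ᵥ ⇑v = c⁻¹ • ⇑v := by
      have h1 : A⁻¹ *ᵥ (A *ᵥ ⇑v) = ⇑v := by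
        rw [mulVec_mulVec, nonsing_inv_mul A ((isUnit_iff_isUnit_det A).1 hAunit), one_mulVec]
      rw [hAv, mulVec_smul] at h1
      have hne : lam j ≠ 0 := (hcj ▸ hcpos).ne'
      calc A⁻¹ *ᵥ ⇑v = (lam j)⁻¹ • (lam j • (A⁻¹ *ᵥ ⇑v)) := by
            rw [smul_smul, inv_mul_cancel₀ hne, one_smul]
        _ = (lam j)⁻¹ • ⇑v := by rw [h1]
        _ = c⁻¹ • ⇑v := by rw [hcj]
    have hTv : toEuclideanCLM (𝕜 := ℝ) A⁻¹ v = c⁻¹ • v := by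
      apply (WithLp.equiv 2 _).injective
      exact hAiv
    have h2 : c⁻¹ ≤ ‖toEuclideanCLM (𝕜 := ℝ) A⁻¹‖ * 1 := by
      have := ContinuousLinearMap.le_opNorm (toEuclideanCLM (𝕜 := ℝ) A⁻¹) v
      rwa [hTv, norm_smul, hv1, mul_one, Real.norm_eq_abs,
        abs_of_pos (inv_pos.2 hcpos)] at this
    rwa [mul_one] at h2
  -- complex side
  have psdC : (Ac - (c : ℂ) • 1).PosSemidef := by
    have h1 := aux_map_psd psdR
    have hmap : (A - c • 1).map Complex.ofReal = Ac - (c : ℂ) • 1 := by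
      ext i j
      by_cases hij : i = j <;>
        simp [Matrix.map_apply, Matrix.one_apply, hij, hAc]
    rwa [hmap] at h1
  have hcoAc : ∀ x : EuclideanSpace ℂ (Fin P),
      c * ‖x‖ ^ 2 ≤ RCLike.re (⟪x, toEuclideanCLM (𝕜 := ℂ) Ac x⟫_ℂ) := aux_coercive psdC
  have hBcH : Bc.IsHermitian := by
    ext i j
    simp only [conjTranspose_apply, hBc, Matrix.map_apply, Complex.star_def,
      Complex.conj_ofReal]
    rw [hB.apply]
  have hcoQ : ∀ x : EuclideanSpace ℂ (Fin P),
      c * ‖x‖ ^ 2 ≤ RCLike.re (⟪x, toEuclideanCLM (𝕜 := ℂ) Q x⟫_ℂ) := by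
    intro x
    have h1 := hcoAc x
    set x' : Fin P → ℂ := WithLp.equiv 2 _ x with hx'
    have hQ1 : (⟪x, toEuclideanCLM (𝕜 := ℂ) Q x⟫_ℂ) = star x' ⬝ᵥ (Q *ᵥ x') := by
      rw [EuclideanSpace.inner_eq_star_dotProduct, dotProduct_comm]; rfl
    have hQ2 : (⟪x, toEuclideanCLM (𝕜 := ℂ) Ac x⟫_ℂ) = star x' ⬝ᵥ (Ac *ᵥ x') := by
      rw [EuclideanSpace.inner_eq_star_dotProduct, dotProduct_comm]; rfl
    set z : ℂ := star x' ⬝ᵥ (Bc *ᵥ x') with hz_def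
    have hz : (starRingEnd ℂ) z = z := by
      have e1 : z = star (star (Bc *ᵥ x') ⬝ᵥ x') := star_dotProduct _ _
      calc (starRingEnd ℂ) z = star (star (star (Bc *ᵥ x') ⬝ᵥ x')) := congrArg star e1
        _ = star (Bc *ᵥ x') ⬝ᵥ x' := star_star _
        _ = (star x' ᵥ* Bcᴴ) ⬝ᵥ x' := by rw [star_mulVec]
        _ = star x' ⬝ᵥ (Bcᴴ *ᵥ x') := (dotProduct_mulVec _ _ _).symm
        _ = z := by rw [hBcH]
    have him : z.im = 0 := Complex.conj_eq_iff_im.mp hz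
    have hsplit : (⟪x, toEuclideanCLM (𝕜 := ℂ) Q x⟫_ℂ)
        = star x' ⬝ᵥ (Ac *ᵥ x') + Complex.I * z := by
      rw [hQ1, hQdef, add_mulVec, smul_mulVec, dotProduct_add, dotProduct_smul,
        smul_eq_mul, hz_def]
    rw [hsplit]
    rw [hQ2] at h1
    simp only [RCLike.re_to_complex] at h1 ⊢
    rw [Complex.add_re, Complex.mul_re, Complex.I_re, Complex.I_im, him]
    simpa using h1
  have hQlb := aux_norm_lb hcoQ
  have hQunit : IsUnit Q := by
    rw [← mulVec_injective_iff_isUnit]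
    intro u w huw
    have h0 : Q *ᵥ (u - w) = 0 := by rw [Matrix.mulVec_sub, huw, sub_self]
    have h1 := hQlb ((WithLp.equiv 2 _).symm (u - w))
    rw [show toEuclideanCLM (𝕜 := ℂ) Q ((WithLp.equiv 2 _).symm (u - w))
        = (WithLp.equiv 2 _).symm (Q *ᵥ (u - w)) from rfl, h0] at h1
    have h1' : c * ‖(WithLp.equiv 2 ((Fin P) → ℂ)).symm (u - w)‖ ≤ 0 := by
      simpa using h1
    have h2 : ‖(WithLp.equiv 2 ((Fin P) → ℂ)).symm (u - w)‖ = 0 := by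
      nlinarith [norm_nonneg ((WithLp.equiv 2 ((Fin P) → ℂ)).symm (u - w)), hcpos]
    have h3 : (WithLp.equiv 2 ((Fin P) → ℂ)).symm (u - w) = 0 := norm_eq_zero.mp h2
    have h4 : u - w = 0 := by
      have := congrArg (WithLp.equiv 2 ((Fin P) → ℂ)) h3
      simpa using this
    exact sub_eq_zero.mp h4
  have hQbound : ‖toEuclideanCLM (𝕜 := ℂ) Q⁻¹‖ ≤ c⁻¹ := aux_inv_bound hQunit hcpos hQlb
  exact ⟨by rw [hnormR]; exact hQbound, hnormR⟩
end

section
/- Suppose m̃(t) > 0 satisfies 1 = λ m̃ + (1/N) ∑_{i=1}^P (1 − (1 + tλ_i)/(1 + tλ_i + m̃λ_i)) in a neighborhood of t = 0, where λ > 0 and λ_i ≥ 0. Let κ = 1/m̃(0), so that κ satisfies 1 = λ/κ + (1/N)∑ λ_i/(κ + λ_i), and let ∂κ/∂λ = (1 − (1/N)∑_{i=1}^P λ_i²/(κ+λ_i)²)^{-1}. Then the derivative of m̃ at t = 0 equals ∂κ/∂λ − 1. -/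
/-- Lemma "mtilde": the derivative at t = 0 of the reciprocal effective
regularization m̃(t) of the tilted covariance equals ∂κ/∂λ − 1, where κ = 1/m̃(0). -/
theorem stmt_14 (P N : ℕ) (hN : 0 < N) (lam : Fin P → ℝ) (hlam : ∀ i, 0 ≤ lam i)
    (l : ℝ) (hl : 0 < l) (mt : ℝ → ℝ) (ε : ℝ) (hε : 0 < ε)
    (hpos : ∀ t : ℝ, |t| < ε → 0 < mt t)
    (heq : ∀ t : ℝ, |t| < ε → 1 = l * mt t + (1 / (N : ℝ)) *
      ∑ i, (1 - (1 + t * lam i) / (1 + t * lam i + mt t * lam i)))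
    (hκ : (1 : ℝ) = l / (mt 0)⁻¹ + (1 / (N : ℝ)) * ∑ i, lam i / ((mt 0)⁻¹ + lam i))
    (m' : ℝ) (hder : HasDerivAt mt m' 0) :
    m' = (1 - (1 / (N : ℝ)) * ∑ i, (lam i) ^ 2 / ((mt 0)⁻¹ + lam i) ^ 2)⁻¹ - 1 := by
  have hm0 : 0 < mt 0 := hpos 0 (by simpa using hε)
  set m0 := mt 0 with hm0def
  have hm0ne : m0 ≠ 0 := ne_of_gt hm0
  have hden : ∀ i, (0:ℝ) < 1 + m0 * lam i := by
    intro i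
    have := hlam i
    nlinarith
  have hdenne : ∀ i, (1 + m0 * lam i) ≠ 0 := fun i => ne_of_gt (hden i)
  have hNpos : (0:ℝ) < (N:ℝ) := by exact_mod_cast hN
  -- derivative of each summand
  have hterm : ∀ i : Fin P, HasDerivAt
      (fun t => 1 - (1 + t * lam i) / (1 + t * lam i + mt t * lam i))
      (m' * (lam i / (1 + m0 * lam i)^2) - m0 * (lam i^2 / (1 + m0 * lam i)^2)) 0 := by
    intro i
    have h1 : HasDerivAt (fun t : ℝ => 1 + t * lam i) (lam i) 0 := by
      simpa using ((hasDerivAt_id (0:ℝ)).mul_const (lam i)).const_add 1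
    have h2 : HasDerivAt (fun t : ℝ => 1 + t * lam i + mt t * lam i)
        (lam i + m' * lam i) 0 := h1.add (hder.mul_const (lam i))
    have hne : (1 + (0:ℝ) * lam i + mt 0 * lam i) ≠ 0 := by
      simpa using hdenne i
    have h3 := (h1.div h2 hne).const_sub 1
    refine h3.congr_deriv ?_
    have hd := hdenne i
    field_simp
    ring
  -- derivative of the whole implicit relation
  have hF : HasDerivAt
      (fun t => l * mt t + (1 / (N : ℝ)) *
        ∑ i, (1 - (1 + t * lam i) / (1 + t * lam i + mt t * lam i)))
      (l * m' + (1 / (N : ℝ)) *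
        ∑ i, (m' * (lam i / (1 + m0 * lam i)^2) - m0 * (lam i^2 / (1 + m0 * lam i)^2))) 0 :=
    (hder.const_mul l).add ((HasDerivAt.fun_sum (fun i _ => hterm i)).const_mul (1 / (N:ℝ)))
  have hev : (fun t => l * mt t + (1 / (N : ℝ)) *
        ∑ i, (1 - (1 + t * lam i) / (1 + t * lam i + mt t * lam i)))
      =ᶠ[nhds (0:ℝ)] (fun _ => (1:ℝ)) := by
    filter_upwards [Metric.ball_mem_nhds (0:ℝ) hε] with t ht
    exact (heq t (by simpa [Real.dist_eq] using ht)).symm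
  have hFconst : HasDerivAt
      (fun t => l * mt t + (1 / (N : ℝ)) *
        ∑ i, (1 - (1 + t * lam i) / (1 + t * lam i + mt t * lam i))) 0 0 :=
    (hasDerivAt_const (0:ℝ) (1:ℝ)).congr_of_eventuallyEq hev
  have hzero : l * m' + (1 / (N : ℝ)) *
      ∑ i, (m' * (lam i / (1 + m0 * lam i)^2) - m0 * (lam i^2 / (1 + m0 * lam i)^2)) = 0 :=
    hF.unique hFconst
  -- abbreviations
  set x := (1 / (N : ℝ)) * ∑ i, lam i / (1 + m0 * lam i)^2 with hx
  set y := (1 / (N : ℝ)) * ∑ i, lam i^2 / (1 + m0 * lam i)^2 with hy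
  have hxnn : 0 ≤ x := by
    apply mul_nonneg (by positivity)
    apply Finset.sum_nonneg
    intro i _
    have := hlam i
    positivity
  have hynn : 0 ≤ y := by
    apply mul_nonneg (by positivity)
    apply Finset.sum_nonneg
    intro i _
    have := hlam i
    positivity
  -- E1 : 0 = l*m' + m'*x - m0*y
  have hsplit : (∑ i, (m' * (lam i / (1 + m0 * lam i)^2) - m0 * (lam i^2 / (1 + m0 * lam i)^2)))
      = m' * (∑ i, lam i / (1 + m0 * lam i)^2) - m0 * (∑ i, lam i^2 / (1 + m0 * lam i)^2) := by
    rw [Finset.sum_sub_distrib, Finset.mul_sum, Finset.mul_sum]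
  have E1 : l * m' + (m' * x - m0 * y) = 0 := by
    rw [hx, hy]
    rw [hsplit] at hzero
    linear_combination hzero
  -- E2 : 1 = l*m0 + (m0*x + m0^2*y)
  have hterm2 : ∀ i : Fin P, lam i / (m0⁻¹ + lam i)
      = m0 * (lam i / (1 + m0 * lam i)^2) + m0^2 * (lam i^2 / (1 + m0 * lam i)^2) := by
    intro i
    have hd := hdenne i
    have hk : m0⁻¹ + lam i = (1 + m0 * lam i) / m0 := by field_simp
    rw [hk]
    field_simp
  have hsum2 : (∑ i, lam i / (m0⁻¹ + lam i))
      = m0 * (∑ i, lam i / (1 + m0 * lam i)^2) + m0^2 * (∑ i, lam i^2 / (1 + m0 * lam i)^2) := by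
    rw [Finset.mul_sum, Finset.mul_sum, ← Finset.sum_add_distrib]
    exact Finset.sum_congr rfl fun i _ => hterm2 i
  have hldiv : l / m0⁻¹ = l * m0 := by field_simp
  have E2 : (1:ℝ) = l * m0 + (m0 * x + m0^2 * y) := by
    rw [hx, hy]
    rw [hldiv, hsum2] at hκ
    linear_combination hκ
  -- the goal sum equals m0^2 * y
  have hterm3 : ∀ i : Fin P, (lam i)^2 / (m0⁻¹ + lam i)^2
      = m0^2 * (lam i^2 / (1 + m0 * lam i)^2) := by
    intro i
    have hd := hdenne i
    have hk : m0⁻¹ + lam i = (1 + m0 * lam i) / m0 := by field_simp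
    rw [hk]
    rw [div_pow]
    field_simp
  have hgoalsum : (1 / (N : ℝ)) * ∑ i, (lam i)^2 / (m0⁻¹ + lam i)^2 = m0^2 * y := by
    rw [hy]
    rw [Finset.sum_congr rfl fun i _ => hterm3 i, ← Finset.mul_sum]
    ring
  rw [hgoalsum]
  have hD : 0 < 1 - m0^2 * y := by nlinarith
  have hDne : (1 : ℝ) - m0^2 * y ≠ 0 := ne_of_gt hD
  have key : m' * (1 - m0^2 * y) = m0^2 * y := by
    linear_combination m0 * E1 + m' * E2
  have hmeq : m' = m0^2 * y / (1 - m0^2 * y) := by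
    rw [eq_div_iff hDne]
    exact key
  rw [hmeq]
  field_simp
  ring
end

section
/- Suppose the eigenvalues satisfy c₁ i^{-1-γ} ≤ λ_i ≤ c₂ i^{-1-γ} for constants 0 < c₁ ≤ c₂ and γ > 0, with P ≥ C·N for a sufficiently large constant C, and let κ = κ(0,N) > 0 solve N = ∑_{i=1}^P λ_i/(κ + λ_i). Then there exist constants depending only on c₁, c₂, γ such that κ ≍ N^{-1-γ}, i.e. c'₁ N^{-1-γ} ≤ κ ≤ c'₂ N^{-1-γ}. -/
open Finset Real

private lemma bern_step {γ : ℝ} (hγ : 0 < γ) {x : ℝ} (hx : 1 ≤ x) :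
    γ * (x + 1) ^ (-(1 + γ)) ≤ x ^ (-γ) - (x + 1) ^ (-γ) := by
  have hx0 : (0:ℝ) < x := lt_of_lt_of_le one_pos hx
  have hx1 : (0:ℝ) < x + 1 := by linarith
  have key : 1 + γ / (x + 1) ≤ ((x + 1) / x) ^ γ := by
    rcases le_or_gt 1 γ with hγ1 | hγ1
    · have hs : (-1:ℝ) ≤ 1 / x := by
        have : (0:ℝ) ≤ 1 / x := by positivity
        linarith
      have h := one_add_mul_self_le_rpow_one_add hs hγ1
      have hxx : (x + 1) / x = 1 + 1 / x := by field_simp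
      rw [hxx]
      refine le_trans ?_ h
      have h2 : γ / (x + 1) ≤ γ * (1 / x) := by
        rw [mul_one_div]
        exact div_le_div_of_nonneg_left hγ.le hx0 (by linarith)
      linarith
    · set t : ℝ := 1 / (x + 1) with ht
      have ht0 : 0 < t := by positivity
      have ht2 : t ≤ 1 / 2 := by
        rw [ht, div_le_div_iff₀ hx1 (by norm_num)]; linarith
      have hs : (-1:ℝ) ≤ -t := by linarith
      have h := rpow_one_add_le_one_add_mul_self hs hγ.le hγ1.le
      have h1 : (1 : ℝ) + -t = x / (x + 1) := by
        rw [ht]; field_simp; ring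
      rw [h1] at h
      -- h : (x/(x+1))^γ ≤ 1 + γ * (-t) = 1 - γ t
      have hB : (0:ℝ) < (x / (x + 1)) ^ γ := rpow_pos_of_pos (by positivity) γ
      have hprod : ((x + 1) / x) ^ γ * (x / (x + 1)) ^ γ = 1 := by
        rw [← Real.mul_rpow (by positivity) (by positivity),
          show (x + 1) / x * (x / (x + 1)) = 1 by field_simp]
        exact Real.one_rpow γ
      have hgt : γ / (x + 1) = γ * t := by rw [ht]; ring
      have h3 : (1 + γ * t) * ((x / (x + 1)) ^ γ) ≤ 1 := by
        nlinarith [mul_le_mul_of_nonneg_left h (show (0:ℝ) ≤ 1 + γ * t by nlinarith),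
          sq_nonneg (γ * t)]
      have h4 : (1 + γ * t) * ((x / (x + 1)) ^ γ) ≤ ((x + 1) / x) ^ γ * ((x / (x + 1)) ^ γ) :=
        h3.trans_eq hprod.symm
      have h5 : 1 + γ * t ≤ ((x + 1) / x) ^ γ := le_of_mul_le_mul_right h4 hB
      linarith [hgt.le, hgt.ge]
  have e1 : (x + 1) ^ (-(1 + γ)) = (x + 1) ^ (-γ) / (x + 1) := by
    rw [show -(1 + γ) = -γ + (-1) by ring, Real.rpow_add hx1, Real.rpow_neg_one]
    ring
  have e2 : x ^ (-γ) = ((x + 1) / x) ^ γ * (x + 1) ^ (-γ) := by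
    rw [Real.div_rpow hx1.le hx0.le, Real.rpow_neg hx1.le, Real.rpow_neg hx0.le]
    have h1 : (0:ℝ) < x ^ γ := rpow_pos_of_pos hx0 γ
    have h2 : (0:ℝ) < (x + 1) ^ γ := rpow_pos_of_pos hx1 γ
    field_simp
  have hposγ : (0:ℝ) < (x + 1) ^ (-γ) := rpow_pos_of_pos hx1 _
  calc γ * (x + 1) ^ (-(1 + γ)) = (γ / (x + 1)) * (x + 1) ^ (-γ) := by rw [e1]; ring
    _ ≤ (((x + 1) / x) ^ γ - 1) * (x + 1) ^ (-γ) :=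
        mul_le_mul_of_nonneg_right (by linarith) hposγ.le
    _ = x ^ (-γ) - (x + 1) ^ (-γ) := by rw [sub_mul, one_mul, ← e2]

private lemma tail_sum {γ : ℝ} (hγ : 0 < γ) {m P : ℕ} (hm : 1 ≤ m) (hmP : m ≤ P) :
    ∑ k ∈ Finset.Ico m P, ((k : ℝ) + 1) ^ (-(1 + γ)) ≤ (m : ℝ) ^ (-γ) / γ := by
  have h1 : ∑ k ∈ Finset.Ico m P, ((k : ℝ) + 1) ^ (-(1 + γ)) ≤
      ∑ k ∈ Finset.Ico m P, (1 / γ) * (((k : ℕ) : ℝ) ^ (-γ) - (((k + 1 : ℕ) : ℝ)) ^ (-γ)) := by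
    apply Finset.sum_le_sum
    intro k hk
    have hk1 : 1 ≤ k := le_trans hm (Finset.mem_Ico.mp hk).1
    have hkR : (1:ℝ) ≤ (k : ℝ) := by exact_mod_cast hk1
    have hb := bern_step hγ hkR
    have hcast : ((k + 1 : ℕ) : ℝ) = (k : ℝ) + 1 := by push_cast; ring
    rw [hcast]
    rw [one_div, inv_mul_eq_div, le_div_iff₀ hγ]
    linarith
  have h2 : ∑ k ∈ Finset.Ico m P, (((k : ℕ) : ℝ) ^ (-γ) - (((k + 1 : ℕ) : ℝ)) ^ (-γ))
      = (m : ℝ) ^ (-γ) - (P : ℝ) ^ (-γ) := by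
    rw [Finset.sum_Ico_eq_sub _ hmP, Finset.sum_range_sub' (fun k => ((k : ℕ) : ℝ) ^ (-γ)),
      Finset.sum_range_sub' (fun k => ((k : ℕ) : ℝ) ^ (-γ))]
    ring
  have hP0 : (0:ℝ) ≤ (P : ℝ) ^ (-γ) := Real.rpow_nonneg (Nat.cast_nonneg P) _
  calc ∑ k ∈ Finset.Ico m P, ((k : ℝ) + 1) ^ (-(1 + γ))
      ≤ ∑ k ∈ Finset.Ico m P, (1 / γ) * (((k : ℕ) : ℝ) ^ (-γ) - (((k + 1 : ℕ) : ℝ)) ^ (-γ)) := h1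
    _ = (1 / γ) * ((m : ℝ) ^ (-γ) - (P : ℝ) ^ (-γ)) := by rw [← Finset.mul_sum, h2]
    _ ≤ (1 / γ) * ((m : ℝ) ^ (-γ)) := by
        apply mul_le_mul_of_nonneg_left (by linarith) (by positivity)
    _ = (m : ℝ) ^ (-γ) / γ := by ring


/-- If λᵢ ≍ i^{-1-γ} and P ≥ CN for a large constant C, then the ridgeless
effective regularization κ = κ(0,N), solving N = ∑ λᵢ/(κ + λᵢ), satisfies
κ ≍ N^{-1-γ}, with constants depending only on c₁, c₂, γ. -/
theorem stmt_17 (γ c₁ c₂ : ℝ) (hγ : 0 < γ) (hc₁ : 0 < c₁) (hc : c₁ ≤ c₂) :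
    ∃ C c₁' c₂' : ℝ, 0 < C ∧ 0 < c₁' ∧ 0 < c₂' ∧
      ∀ (N P : ℕ) (lam : Fin P → ℝ) (κ : ℝ),
        0 < N → C * (N : ℝ) ≤ (P : ℝ) →
        (∀ i : Fin P, c₁ * (((i : ℕ) + 1 : ℝ)) ^ (-(1 + γ)) ≤ lam i ∧
          lam i ≤ c₂ * (((i : ℕ) + 1 : ℝ)) ^ (-(1 + γ))) →
        0 < κ → (N : ℝ) = ∑ i, lam i / (κ + lam i) →
        c₁' * (N : ℝ) ^ (-(1 + γ)) ≤ κ ∧ κ ≤ c₂' * (N : ℝ) ^ (-(1 + γ)) := by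
  have hc₂ : 0 < c₂ := hc₁.trans_le hc
  have h4γ : (0:ℝ) < (4:ℝ) ^ γ := Real.rpow_pos_of_pos (by norm_num) γ
  refine ⟨2, c₁ * 2 ^ (-(1 + γ)), c₂ * (1 + 1 / γ) * (1 + 2 * 4 ^ γ), by norm_num,
    by positivity, by positivity, ?_⟩
  intro N P lam κ hN hP hlam hκ heq
  have hNpos : (0:ℝ) < (N : ℝ) := by exact_mod_cast hN
  have hlam_pos : ∀ i : Fin P, 0 < lam i := fun i =>
    lt_of_lt_of_le (by positivity) (hlam i).1
  have hden_pos : ∀ i : Fin P, 0 < κ + lam i := fun i => by linarith [hlam_pos i]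
  set f : ℕ → ℝ := fun k => if h : k < P then lam ⟨k, h⟩ / (κ + lam ⟨k, h⟩) else 0 with hf
  have hf_nonneg : ∀ k, 0 ≤ f k := by
    intro k
    simp only [hf]
    split
    · exact div_nonneg (hlam_pos _).le (hden_pos _).le
    · exact le_refl 0
  have hf_le_one : ∀ k, f k ≤ 1 := by
    intro k
    simp only [hf]
    split
    · rw [div_le_one (hden_pos _)]; linarith
    · norm_num
  have hsum : (N : ℝ) = ∑ k ∈ Finset.range P, f k := by
    rw [heq, ← Fin.sum_univ_eq_sum_range f]
    apply Finset.sum_congr rfl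
    intro i _
    simp only [hf]
    rw [dif_pos i.isLt]
  have h2NP : 2 * N ≤ P := by
    have h' : ((2 * N : ℕ) : ℝ) ≤ (P : ℝ) := by push_cast; linarith
    exact_mod_cast h'
  have hf_tail : ∀ k, k < P → f k ≤ c₂ / κ * ((k : ℝ) + 1) ^ (-(1 + γ)) := by
    intro k hkP
    simp only [hf]
    rw [dif_pos hkP]
    have h1 : lam ⟨k, hkP⟩ / (κ + lam ⟨k, hkP⟩) ≤ lam ⟨k, hkP⟩ / κ :=
      div_le_div_of_nonneg_left (hlam_pos _).le hκ (by linarith [hlam_pos ⟨k, hkP⟩])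
    have h2 : lam ⟨k, hkP⟩ / κ ≤ (c₂ * ((k : ℝ) + 1) ^ (-(1 + γ))) / κ :=
      (div_le_div_iff_of_pos_right hκ).mpr (hlam ⟨k, hkP⟩).2
    calc lam ⟨k, hkP⟩ / (κ + lam ⟨k, hkP⟩) ≤ (c₂ * ((k : ℝ) + 1) ^ (-(1 + γ))) / κ :=
          h1.trans h2
      _ = c₂ / κ * ((k : ℝ) + 1) ^ (-(1 + γ)) := by ring
  constructor
  · -- lower bound
    by_contra hcon
    push_neg at hcon
    have key : ∀ k ∈ Finset.range (2 * N), (1:ℝ) / 2 < f k := by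
      intro k hk
      rw [Finset.mem_range] at hk
      have hkP : k < P := lt_of_lt_of_le hk h2NP
      have hk1 : (0:ℝ) < (k : ℝ) + 1 := by positivity
      have hle : ((k : ℝ) + 1) ≤ 2 * (N : ℝ) := by
        have h' : k + 1 ≤ 2 * N := hk
        exact_mod_cast h'
      have hmono : ((2:ℝ) * N) ^ (-(1 + γ)) ≤ ((k : ℝ) + 1) ^ (-(1 + γ)) :=
        Real.rpow_le_rpow_of_nonpos hk1 hle (by linarith)
      have heqq : ((2:ℝ) * N) ^ (-(1 + γ)) = 2 ^ (-(1 + γ)) * (N : ℝ) ^ (-(1 + γ)) :=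
        Real.mul_rpow (by norm_num) hNpos.le
      have hlam_ge : c₁ * 2 ^ (-(1 + γ)) * (N : ℝ) ^ (-(1 + γ)) ≤ lam ⟨k, hkP⟩ := by
        calc c₁ * 2 ^ (-(1 + γ)) * (N : ℝ) ^ (-(1 + γ)) = c₁ * ((2:ℝ) * N) ^ (-(1 + γ)) := by
              rw [heqq]; ring
          _ ≤ c₁ * (((k : ℝ) + 1) ^ (-(1 + γ))) := by
              exact mul_le_mul_of_nonneg_left hmono hc₁.le
          _ ≤ lam ⟨k, hkP⟩ := (hlam ⟨k, hkP⟩).1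
      have hκlt : κ < lam ⟨k, hkP⟩ := lt_of_lt_of_le hcon hlam_ge
      simp only [hf]
      rw [dif_pos hkP, lt_div_iff₀ (hden_pos _)]
      linarith
    have hconst : ∑ _k ∈ Finset.range (2 * N), (1:ℝ) / 2 = (N : ℝ) := by
      rw [Finset.sum_const, Finset.card_range, nsmul_eq_mul]
      push_cast; ring
    have hlt : (N : ℝ) < ∑ k ∈ Finset.range (2 * N), f k := by
      have h0 := Finset.sum_lt_sum_of_nonempty
        (s := Finset.range (2 * N)) (by simp; omega) key
      linarith [hconst ▸ h0]
    have hge : ∑ k ∈ Finset.range (2 * N), f k ≤ (N : ℝ) := by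
      rw [hsum]
      exact Finset.sum_le_sum_of_subset_of_nonneg (Finset.range_subset_range.mpr h2NP)
        (fun k _ _ => hf_nonneg k)
    linarith
  · -- upper bound
    rcases eq_or_lt_of_le (Nat.succ_le_of_lt hN) with h1 | h2
    · -- N = 1
      have hN1 : N = 1 := h1.symm
      subst hN1
      have hP1 : 1 ≤ P := by omega
      have hsplit : ∑ k ∈ Finset.range P, f k = f 0 + ∑ k ∈ Finset.Ico 1 P, f k := by
        simp only [Finset.range_eq_Ico]
        rw [← Finset.sum_Ico_consecutive f (Nat.zero_le 1) hP1]
        congr 1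
        simp
      have hhead : f 0 ≤ c₂ / κ := by
        have h := hf_tail 0 (by omega)
        simpa using h
      have htail : ∑ k ∈ Finset.Ico 1 P, f k ≤ c₂ / κ * (1 / γ) := by
        calc ∑ k ∈ Finset.Ico 1 P, f k
            ≤ ∑ k ∈ Finset.Ico 1 P, c₂ / κ * ((k : ℝ) + 1) ^ (-(1 + γ)) :=
              Finset.sum_le_sum (fun k hk => hf_tail k (Finset.mem_Ico.mp hk).2)
          _ = c₂ / κ * ∑ k ∈ Finset.Ico 1 P, ((k : ℝ) + 1) ^ (-(1 + γ)) := by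
              rw [Finset.mul_sum]
          _ ≤ c₂ / κ * ((1 : ℝ) ^ (-γ) / γ) := by
              apply mul_le_mul_of_nonneg_left _ (by positivity)
              have := tail_sum hγ (le_refl 1) hP1
              simpa using this
          _ = c₂ / κ * (1 / γ) := by rw [Real.one_rpow]
      have hineq : (1:ℝ) ≤ c₂ / κ * (1 + 1 / γ) := by
        have := hsum
        push_cast at this
        nlinarith [hhead, htail]
      have hκle : κ ≤ c₂ * (1 + 1 / γ) := by
        have h' : (1:ℝ) ≤ (c₂ * (1 + 1 / γ)) / κ := by
          calc (1:ℝ) ≤ c₂ / κ * (1 + 1 / γ) := hineq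
            _ = (c₂ * (1 + 1 / γ)) / κ := by ring
        rw [le_div_iff₀ hκ, one_mul] at h'
        linarith
      have : ((1:ℕ) : ℝ) ^ (-(1 + γ)) = 1 := by
        rw [Nat.cast_one, Real.one_rpow]
      rw [this, mul_one]
      nlinarith [h4γ, hγ, hc₂, mul_pos hc₂ (show (0:ℝ) < 1/γ by positivity)]
    · -- 2 ≤ N
      have hN2 : 2 ≤ N := h2
      set m := N / 2 with hm
      have hm1 : 1 ≤ m := by omega
      have hmP : m ≤ P := by omega
      have hmR : (N : ℝ) / 4 ≤ (m : ℝ) := by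
        have h' : N ≤ 4 * m := by omega
        have h'' : (N : ℝ) ≤ 4 * (m : ℝ) := by exact_mod_cast h'
        linarith
      have hmN : (m : ℝ) ≤ (N : ℝ) / 2 := by
        have h' : 2 * m ≤ N := by omega
        have h'' : 2 * (m : ℝ) ≤ (N : ℝ) := by exact_mod_cast h'
        linarith
      have hmpos : (0:ℝ) < (m : ℝ) := by
        have : (0:ℕ) < m := hm1
        exact_mod_cast this
      set T := (m : ℝ) ^ (-γ) with hT
      have hTpos : 0 < T := Real.rpow_pos_of_pos hmpos _
      have hsplit : ∑ k ∈ Finset.range P, f k =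
          ∑ k ∈ Finset.range m, f k + ∑ k ∈ Finset.Ico m P, f k := by
        simp only [Finset.range_eq_Ico]
        rw [← Finset.sum_Ico_consecutive f (Nat.zero_le m) hmP]
      have hhead : ∑ k ∈ Finset.range m, f k ≤ (m : ℝ) := by
        calc ∑ k ∈ Finset.range m, f k ≤ ∑ _k ∈ Finset.range m, (1:ℝ) :=
              Finset.sum_le_sum (fun k _ => hf_le_one k)
          _ = (m : ℝ) := by simp
      have htail : ∑ k ∈ Finset.Ico m P, f k ≤ c₂ / κ * (T / γ) := by
        calc ∑ k ∈ Finset.Ico m P, f k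
            ≤ ∑ k ∈ Finset.Ico m P, c₂ / κ * ((k : ℝ) + 1) ^ (-(1 + γ)) :=
              Finset.sum_le_sum (fun k hk => hf_tail k (Finset.mem_Ico.mp hk).2)
          _ = c₂ / κ * ∑ k ∈ Finset.Ico m P, ((k : ℝ) + 1) ^ (-(1 + γ)) := by
              rw [Finset.mul_sum]
          _ ≤ c₂ / κ * (T / γ) :=
            mul_le_mul_of_nonneg_left (tail_sum hγ hm1 hmP) (by positivity)
      have hA : (N : ℝ) ≤ (m : ℝ) + c₂ / κ * (T / γ) := by
        rw [hsum, hsplit]; linarith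
      have hmain : (N : ℝ) / 2 ≤ (c₂ * T) / (κ * γ) := by
        have he : c₂ / κ * (T / γ) = (c₂ * T) / (κ * γ) := by ring
        rw [← he]; linarith
      rw [div_le_div_iff₀ (by norm_num) (mul_pos hκ hγ)] at hmain
      -- hmain : N * (κ * γ) ≤ c₂ * T * 2
      have hTle : T ≤ 4 ^ γ * (N : ℝ) ^ (-γ) := by
        have hmono : ((N : ℝ) / 4) ^ (-γ) ≥ (m:ℝ) ^ (-γ) := by
          exact Real.rpow_le_rpow_of_nonpos (by positivity) hmR (by linarith)
        have he : ((N : ℝ) / 4) ^ (-γ) = 4 ^ γ * (N : ℝ) ^ (-γ) := by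
          rw [Real.div_rpow hNpos.le (by norm_num), Real.rpow_neg (by norm_num : (0:ℝ) ≤ 4)]
          field_simp
        rw [← he]; exact hmono
      set u := (N : ℝ) ^ (-γ) with hu
      have hupos : 0 < u := Real.rpow_pos_of_pos hNpos _
      have hNsplit : (N : ℝ) ^ (-(1 + γ)) = u / (N : ℝ) := by
        rw [hu, show -(1 + γ) = -γ + (-1) by ring, Real.rpow_add hNpos, Real.rpow_neg_one]
        ring
      rw [hNsplit, mul_div_assoc', le_div_iff₀ hNpos]
      -- goal : κ * N ≤ c₂ * (1 + 1/γ) * (1 + 2 * 4^γ) * u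
      have hγinv : (1 / γ) * γ = 1 := by field_simp
      have e3 : κ * (N : ℝ) * γ ≤ 2 * c₂ * (4 ^ γ * u) := by
        have h' : c₂ * T ≤ c₂ * (4 ^ γ * u) := mul_le_mul_of_nonneg_left hTle hc₂.le
        nlinarith
      have e4 : 2 * c₂ * (4 ^ γ * u) ≤ c₂ * (1 + 1 / γ) * (1 + 2 * 4 ^ γ) * γ * u := by
        have hK : 2 * c₂ * 4 ^ γ ≤ c₂ * (1 + 1 / γ) * (1 + 2 * 4 ^ γ) * γ := by
          have hexp : c₂ * (1 + 1 / γ) * (1 + 2 * 4 ^ γ) * γ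
              = c₂ * (γ + 1) * (1 + 2 * 4 ^ γ) := by field_simp
          rw [hexp]
          have hd : c₂ * (γ + 1) * (1 + 2 * 4 ^ γ) - 2 * c₂ * 4 ^ γ
              = c₂ * (γ + 1) + 2 * (c₂ * 4 ^ γ) * γ := by ring
          have hp1 : 0 < c₂ * (γ + 1) := by positivity
          have hp2 : 0 < 2 * (c₂ * 4 ^ γ) * γ := by positivity
          linarith
        calc 2 * c₂ * (4 ^ γ * u) = (2 * c₂ * 4 ^ γ) * u := by ring
          _ ≤ (c₂ * (1 + 1 / γ) * (1 + 2 * 4 ^ γ) * γ) * u :=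
            mul_le_mul_of_nonneg_right hK hupos.le
          _ = c₂ * (1 + 1 / γ) * (1 + 2 * 4 ^ γ) * γ * u := by ring
      have e5 : κ * (N : ℝ) * γ ≤ (c₂ * (1 + 1 / γ) * (1 + 2 * 4 ^ γ) * u) * γ := by
        linarith [e3, e4]
      exact le_of_mul_le_mul_right e5 hγ
end
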